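/- Let ℓ ≥ 1, α ∈ (0,1], let k_1, …, k_ℓ be positive integers, and let 0 ≤ r_1 ≤ r_2 ≤ … ≤ r_ℓ be reals. Then Σ_{j=1}^{ℓ} (r_j/k_j)·∏_{t=j+1}^{ℓ} (1 − α/k_t) ≥ (1/α)·(1 − ∏_{j=1}^{ℓ} (1 − α/k_j))·(Σ_{j=1}^{ℓ} r_j/k_j) / (Σ_{j=1}^{ℓ} 1/k_j). -/

import Mathlib

open Finset

lemma tele' {ι : Type*} [LinearOrder ι] (f : ι → ℝ) (s : Finset ι) :
    1 - ∏ i ∈ s, (1 - f i) = ∑ i ∈ s, f i * ∏ t ∈ s.filter (i < ·), (1 - f t) := by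
  induction s using Finset.induction_on_max with
  | empty => simp
  | insert a s ha ih =>
    have has : a ∉ s := fun h => lt_irrefl a (ha a h)
    rw [Finset.prod_insert has, Finset.sum_insert has]
    have h1 : (insert a s).filter (a < ·) = ∅ := by
      ext x; simp only [Finset.mem_filter, Finset.mem_insert, Finset.notMem_empty, iff_false]
      rintro ⟨(rfl | hx), hlt⟩
      · exact lt_irrefl _ hlt
      · exact absurd hlt (lt_asymm (ha x hx))
    have h2 : ∀ i ∈ s, (insert a s).filter (i < ·) = insert a (s.filter (i < ·)) := by
      intro i hi
      ext x; simp only [Finset.mem_filter, Finset.mem_insert]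
      constructor
      · rintro ⟨(rfl | hx), hlt⟩
        · exact Or.inl rfl
        · exact Or.inr ⟨hx, hlt⟩
      · rintro (rfl | ⟨hx, hlt⟩)
        · exact ⟨Or.inl rfl, ha i hi⟩
        · exact ⟨Or.inr hx, hlt⟩
    rw [h1]
    rw [Finset.sum_congr rfl (fun i hi => by
      rw [h2 i hi, Finset.prod_insert (fun h => has (Finset.mem_filter.mp h).1)])]
    simp only [Finset.prod_empty, mul_one]
    have : ∑ i ∈ s, f i * ((1 - f a) * ∏ t ∈ s.filter (i < ·), (1 - f t))
        = (1 - f a) * ∑ i ∈ s, f i * ∏ t ∈ s.filter (i < ·), (1 - f t) := by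
      rw [Finset.mul_sum]; exact Finset.sum_congr rfl fun i _ => by ring
    rw [this, ← ih]; ring

lemma cheb' {ι : Type*} (s : Finset ι) (w r P : ι → ℝ) (hw : ∀ i ∈ s, 0 ≤ w i)
    (hmono : ∀ i ∈ s, ∀ j ∈ s, 0 ≤ (r i - r j) * (P i - P j)) :
    (∑ i ∈ s, w i * r i) * (∑ i ∈ s, w i * P i) ≤
      (∑ i ∈ s, w i) * (∑ i ∈ s, w i * (r i * P i)) := by
  have key : 0 ≤ ∑ i ∈ s, ∑ j ∈ s, w i * w j * ((r i - r j) * (P i - P j)) :=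
    Finset.sum_nonneg fun i hi => Finset.sum_nonneg fun j hj =>
      mul_nonneg (mul_nonneg (hw i hi) (hw j hj)) (hmono i hi j hj)
  have inner : ∀ i, ∑ j ∈ s, w i * w j * ((r i - r j) * (P i - P j))
      = (w i * (r i * P i)) * (∑ j ∈ s, w j) - (w i * r i) * (∑ j ∈ s, w j * P j)
        - (w i * P i) * (∑ j ∈ s, w j * r j) + w i * (∑ j ∈ s, w j * (r j * P j)) := by
    intro i
    simp only [Finset.mul_sum, ← Finset.sum_sub_distrib, ← Finset.sum_add_distrib]
    exact Finset.sum_congr rfl fun j _ => by ring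
  rw [Finset.sum_congr rfl fun i _ => inner i] at key
  simp only [Finset.sum_add_distrib, Finset.sum_sub_distrib, ← Finset.sum_mul,
    ← Finset.mul_sum] at key
  nlinarith [key]


/-- the key algebraic inequality in the curvature-based lower bound:
`Σ_j (r_j/k_j)·Π_{t>j}(1 − α/k_t) ≥ (1/α)·(1 − Π_j (1 − α/k_j))·(Σ_j r_j/k_j)/(Σ_j 1/k_j)`. -/
theorem stmt17 {ℓ : ℕ} (hℓ : 1 ≤ ℓ) (α : ℝ) (hα0 : 0 < α) (hα1 : α ≤ 1)
    (k : Fin ℓ → ℕ) (hk : ∀ j, 1 ≤ k j)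
    (r : Fin ℓ → ℝ) (hr0 : ∀ j, 0 ≤ r j) (hrmono : Monotone r) :
    (1 / α) * (1 - ∏ j : Fin ℓ, (1 - α / (k j : ℝ))) *
        ((∑ j : Fin ℓ, r j / (k j : ℝ)) / ∑ j : Fin ℓ, ((k j : ℝ))⁻¹) ≤
      ∑ j : Fin ℓ, (r j / (k j : ℝ)) * ∏ t ∈ Finset.Ioi j, (1 - α / (k t : ℝ)) := by
  set w : Fin ℓ → ℝ := fun j => ((k j : ℝ))⁻¹ with hw
  set P : Fin ℓ → ℝ := fun j => ∏ t ∈ Finset.Ioi j, (1 - α / (k t : ℝ)) with hP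
  have hk1 : ∀ j, (1 : ℝ) ≤ (k j : ℝ) := fun j => by exact_mod_cast hk j
  have hkpos : ∀ j, (0 : ℝ) < (k j : ℝ) := fun j => lt_of_lt_of_le one_pos (hk1 j)
  have hwpos : ∀ j, 0 < w j := fun j => inv_pos.mpr (hkpos j)
  have hfac0 : ∀ j, 0 ≤ 1 - α / (k j : ℝ) := by
    intro j
    have : α / (k j : ℝ) ≤ 1 := by
      rw [div_le_one (hkpos j)]; exact hα1.trans (hk1 j)
    linarith
  have hfac1 : ∀ j, 1 - α / (k j : ℝ) ≤ 1 := by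
    intro j
    have : 0 ≤ α / (k j : ℝ) := div_nonneg hα0.le (hkpos j).le
    linarith
  -- monotonicity of P
  have hPmono : Monotone P := by
    intro i j hij
    rcases eq_or_lt_of_le hij with rfl | hij
    · exact le_rfl
    · have hunion : Finset.Ioc i j ∪ Finset.Ioi j = Finset.Ioi i := by
        ext x
        simp only [Finset.mem_union, Finset.mem_Ioc, Finset.mem_Ioi]
        constructor
        · rintro (⟨h1, _⟩ | h2)
          · exact h1
          · exact hij.trans h2
        · intro hx
          rcases le_or_gt x j with h | h
          · exact Or.inl ⟨hx, h⟩
          · exact Or.inr h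
      have hdisj : Disjoint (Finset.Ioc i j) (Finset.Ioi j) := by
        rw [Finset.disjoint_left]
        intro x hx hx'
        exact absurd (Finset.mem_Ioi.mp hx') (not_lt_of_ge (Finset.mem_Ioc.mp hx).2)
      have : P i = (∏ t ∈ Finset.Ioc i j, (1 - α / (k t : ℝ))) * P j := by
        show (∏ t ∈ Finset.Ioi i, (1 - α / (k t : ℝ))) = _
        rw [← hunion, Finset.prod_union hdisj]
      rw [this]
      have hPj0 : 0 ≤ P j := Finset.prod_nonneg fun t _ => hfac0 t
      have hle1 : ∏ t ∈ Finset.Ioc i j, (1 - α / (k t : ℝ)) ≤ 1 :=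
        Finset.prod_le_one (fun t _ => hfac0 t) (fun t _ => hfac1 t)
      nlinarith [hPj0, hle1]
  -- telescoping
  have htel : 1 - ∏ j : Fin ℓ, (1 - α / (k j : ℝ)) = α * ∑ j : Fin ℓ, w j * P j := by
    have hfilter : ∀ i : Fin ℓ, Finset.univ.filter (i < ·) = Finset.Ioi i := by
      intro i; ext x; simp
    have := tele' (fun j : Fin ℓ => α / (k j : ℝ)) Finset.univ
    simp only [hfilter] at this
    rw [this, Finset.mul_sum]
    exact Finset.sum_congr rfl fun j _ => by rw [hP, hw]; field_simp
  -- Chebyshev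
  have hcheb := cheb' Finset.univ w r P (fun i _ => (hwpos i).le)
    (fun i _ j _ => by
      rcases le_total i j with h | h
      · nlinarith [mul_nonneg (sub_nonneg.mpr (hrmono h)) (sub_nonneg.mpr (hPmono h))]
      · exact mul_nonneg (by linarith [hrmono h]) (by linarith [hPmono h]))
  have hSw : 0 < ∑ j : Fin ℓ, w j := by
    apply Finset.sum_pos (fun j _ => hwpos j)
    exact Finset.univ_nonempty_iff.mpr (Fin.pos_iff_nonempty.mp hℓ)
  have hconv1 : ∀ j, r j / (k j : ℝ) = w j * r j := fun j => by rw [hw]; ring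
  rw [htel]
  have hgoal : ∑ j : Fin ℓ, (r j / (k j : ℝ)) * P j = ∑ j : Fin ℓ, w j * (r j * P j) :=
    Finset.sum_congr rfl fun j _ => by rw [hconv1]; ring
  calc (1 / α) * (α * ∑ j : Fin ℓ, w j * P j) *
        ((∑ j : Fin ℓ, r j / (k j : ℝ)) / ∑ j : Fin ℓ, w j)
      = ((∑ j : Fin ℓ, w j * r j) * (∑ j : Fin ℓ, w j * P j)) / (∑ j : Fin ℓ, w j) := by
        rw [Finset.sum_congr rfl fun j _ => hconv1 j]
        field_simp
    _ ≤ ∑ j : Fin ℓ, w j * (r j * P j) := by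
        rw [div_le_iff₀ hSw]
        calc (∑ j : Fin ℓ, w j * r j) * (∑ j : Fin ℓ, w j * P j)
            ≤ (∑ j : Fin ℓ, w j) * (∑ j : Fin ℓ, w j * (r j * P j)) := hcheb
          _ = (∑ j : Fin ℓ, w j * (r j * P j)) * (∑ j : Fin ℓ, w j) := by ring
    _ = ∑ j : Fin ℓ, (r j / (k j : ℝ)) * P j := hgoal.symm
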